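/- Let Y be a finite nonempty set, π_ref and π_te probability mass functions on Y with full support, r : Y → ℝ, and β₁, β₂ ≥ 0 with β₁ + β₂ > 0. Define the objective J(π) = ∑_y π(y)·r(y) − β₁·D_KL(π‖π_ref) − β₂·D_KL(π‖π_te) over probability mass functions π on Y with full support, where D_KL(p‖q) = ∑_y p(y)·log(p(y)/q(y)). Then the unique maximizer of J is π*(y) = (1/Z)·π_ref(y)^{β₁/(β₁+β₂)}·π_te(y)^{β₂/(β₁+β₂)}·exp(r(y)/(β₁+β₂)), where Z is the normalizing constant. -/
import Mathlib

open Real Finset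

noncomputable def KL {Y : Type*} [Fintype Y] (p q : Y → ℝ) : ℝ :=
  ∑ y, p y * Real.log (p y / q y)

lemma gibbs {Y : Type*} [Fintype Y] (p q : Y → ℝ)
    (hp : ∀ y, 0 < p y) (hq : ∀ y, 0 < q y)
    (hps : ∑ y, p y = 1) (hqs : ∑ y, q y = 1) :
    0 ≤ KL p q ∧ (KL p q = 0 → p = q) := by
  have hterm : ∀ y, p y * (q y / p y - 1 - Real.log (q y / p y))
      = (q y - p y) + p y * Real.log (p y / q y) := by
    intro y
    rw [Real.log_div (ne_of_gt (hq y)) (ne_of_gt (hp y)),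
        Real.log_div (ne_of_gt (hp y)) (ne_of_gt (hq y))]
    have hne := ne_of_gt (hp y)
    field_simp
    ring
  have hsum : ∑ y, p y * (q y / p y - 1 - Real.log (q y / p y)) = KL p q := by
    simp only [hterm, Finset.sum_add_distrib, Finset.sum_sub_distrib, hps, hqs, KL]
    ring
  have hnonneg : ∀ y ∈ Finset.univ (α := Y),
      0 ≤ p y * (q y / p y - 1 - Real.log (q y / p y)) := by
    intro y _
    have hx : 0 < q y / p y := div_pos (hq y) (hp y)
    have := Real.log_le_sub_one_of_pos hx
    nlinarith [hp y]
  constructor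
  · rw [← hsum]
    exact Finset.sum_nonneg hnonneg
  · intro h0
    have := (Finset.sum_eq_zero_iff_of_nonneg hnonneg).1 (by rw [hsum, h0])
    funext y
    have hy := this y (Finset.mem_univ y)
    have hx : 0 < q y / p y := div_pos (hq y) (hp y)
    by_contra hne
    have hne1 : q y / p y ≠ 1 := by
      intro h1
      exact hne ((div_eq_one_iff_eq (ne_of_gt (hp y))).1 h1).symm
    have hlt := Real.log_lt_sub_one_of_pos hx hne1
    nlinarith [hp y]

theorem daDPO_optimal_policy
    {Y : Type*} [Fintype Y] [Nonempty Y]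
    (pref pte : Y → ℝ) (r : Y → ℝ) (β₁ β₂ : ℝ)
    (hβ₁ : 0 ≤ β₁) (hβ₂ : 0 ≤ β₂) (hβ : 0 < β₁ + β₂)
    (href_pos : ∀ y, 0 < pref y) (href_sum : ∑ y, pref y = 1)
    (hte_pos : ∀ y, 0 < pte y) (hte_sum : ∑ y, pte y = 1)
    (Z : ℝ)
    (hZ : Z = ∑ y, pref y ^ (β₁ / (β₁ + β₂)) * pte y ^ (β₂ / (β₁ + β₂)) *
        Real.exp (r y / (β₁ + β₂)))
    (πs : Y → ℝ)
    (hπs : ∀ y, πs y = (1 / Z) * (pref y ^ (β₁ / (β₁ + β₂)) *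
        pte y ^ (β₂ / (β₁ + β₂)) * Real.exp (r y / (β₁ + β₂))))
    (J : (Y → ℝ) → ℝ)
    (hJ : ∀ p, J p = (∑ y, p y * r y) - β₁ * KL p pref - β₂ * KL p pte) :
    ∀ p : Y → ℝ, (∀ y, 0 < p y) → (∑ y, p y = 1) →
      J p ≤ J πs ∧ (J p = J πs → p = πs) := by
  have hβne : β₁ + β₂ ≠ 0 := ne_of_gt hβ
  have hfac : ∀ y, 0 < pref y ^ (β₁ / (β₁ + β₂)) * pte y ^ (β₂ / (β₁ + β₂)) *
      Real.exp (r y / (β₁ + β₂)) := fun y => by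
    have h1 := href_pos y; have h2 := hte_pos y; positivity
  have hZpos : 0 < Z := by
    rw [hZ]
    exact Finset.sum_pos (fun y _ => hfac y) Finset.univ_nonempty
  have hπpos : ∀ y, 0 < πs y := fun y => by
    rw [hπs y]
    have h1 := hfac y
    positivity
  have hπsum : ∑ y, πs y = 1 := by
    simp only [hπs]
    rw [← Finset.mul_sum, ← hZ]
    field_simp
  have hlogπ : ∀ y, Real.log (πs y) = β₁ / (β₁ + β₂) * Real.log (pref y)
      + β₂ / (β₁ + β₂) * Real.log (pte y) + r y / (β₁ + β₂) - Real.log Z := by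
    intro y
    have h1 := href_pos y; have h2 := hte_pos y
    have h3 : (0:ℝ) < pref y ^ (β₁ / (β₁ + β₂)) := Real.rpow_pos_of_pos h1 _
    have h4 : (0:ℝ) < pte y ^ (β₂ / (β₁ + β₂)) := Real.rpow_pos_of_pos h2 _
    rw [hπs y, Real.log_mul (by positivity) (ne_of_gt (hfac y)),
        Real.log_mul (by positivity) (by positivity),
        Real.log_mul (by positivity) (by positivity),
        Real.log_rpow (href_pos y), Real.log_rpow (hte_pos y), Real.log_exp,
        one_div, Real.log_inv]
    ring
  have key : ∀ p : Y → ℝ, (∀ y, 0 < p y) → (∑ y, p y = 1) →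
      J p = (β₁ + β₂) * Real.log Z - (β₁ + β₂) * KL p πs := by
    intro p hp hs
    have hpt : ∀ y, p y * r y - β₁ * (p y * Real.log (p y / pref y))
        - β₂ * (p y * Real.log (p y / pte y))
        = (β₁ + β₂) * Real.log Z * p y
          - (β₁ + β₂) * (p y * Real.log (p y / πs y)) := by
      intro y
      rw [Real.log_div (ne_of_gt (hp y)) (ne_of_gt (href_pos y)),
          Real.log_div (ne_of_gt (hp y)) (ne_of_gt (hte_pos y)),
          Real.log_div (ne_of_gt (hp y)) (ne_of_gt (hπpos y)),
          hlogπ y]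
      field_simp
      ring
    rw [hJ]
    unfold KL
    rw [Finset.mul_sum, Finset.mul_sum, ← Finset.sum_sub_distrib,
        ← Finset.sum_sub_distrib]
    rw [Finset.sum_congr rfl (fun y _ => hpt y)]
    rw [Finset.sum_sub_distrib, ← Finset.mul_sum, ← Finset.mul_sum, hs, mul_one]
  have hKL0 : KL πs πs = 0 := by
    unfold KL
    apply Finset.sum_eq_zero
    intro y _
    rw [div_self (ne_of_gt (hπpos y)), Real.log_one, mul_zero]
  intro p hp hs
  have hJp := key p hp hs
  have hJπ := key πs hπpos hπsum
  rw [hKL0, mul_zero, sub_zero] at hJπ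
  obtain ⟨hge, heq⟩ := gibbs p πs hp hπpos hs hπsum
  constructor
  · rw [hJp, hJπ]
    nlinarith
  · intro h
    apply heq
    rw [hJp, hJπ] at h
    nlinarith
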